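/- Let H be a positive definite symmetric 2×2 real matrix, set S(x) = (1/2)⟨x, Hx⟩ and P(x) = Hx. Let k ≥ 1 be an integer, ν ∈ ℝ, and let U : ℝ² → ℝ² have components which are homogeneous polynomials of degree k. If ⟨U(x), P(x)⟩ + ν·S(x)·div U(x) = 0 for all x ∈ ℝ², then there exists a homogeneous polynomial σ of degree k − 1 such that U(x) = −(ν/2)·div U(x)·x + σ(x)·((Hx)₂, −(Hx)₁) for all x ∈ ℝ². -/

import Mathlib

open Matrix MvPolynomial

private lemma deg2 (d : Fin 2 →₀ ℕ) : d.degree = d 0 + d 1 := by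
  rw [Finsupp.degree_apply, Finset.sum_subset (Finset.subset_univ d.support)
    (fun i _ hi => by simpa using Finsupp.notMem_support_iff.mp hi), Fin.sum_univ_two]

private lemma pderiv_isHom {k : ℕ} {p : MvPolynomial (Fin 2) ℝ}
    (hp : p.IsHomogeneous k) (i : Fin 2) : (pderiv i p).IsHomogeneous (k - 1) := by
  have h : pderiv i p
      = ∑ d ∈ p.support, monomial (d - Finsupp.single i 1) (coeff d p * d i) := by
    conv_lhs => rw [p.as_sum]
    rw [map_sum]
    exact Finset.sum_congr rfl fun d _ => pderiv_monomial
  rw [h]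
  apply MvPolynomial.IsHomogeneous.sum
  intro d hd
  rcases Nat.eq_zero_or_pos (d i) with h0 | h0
  · rw [h0, Nat.cast_zero, mul_zero, monomial_zero]
    exact isHomogeneous_zero _ _ _
  · apply isHomogeneous_monomial
    have hdeg : d.degree = k := by
      have := hp (mem_support_iff.mp hd)
      rwa [Finsupp.degree_eq_weight_one]
    rw [deg2] at hdeg
    rw [deg2, Finsupp.tsub_apply, Finsupp.tsub_apply]
    obtain rfl | rfl : i = 0 ∨ i = 1 := by fin_cases i <;> simp
    · simp only [Finsupp.single_apply]
      norm_num
      omega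
    · simp only [Finsupp.single_apply]
      norm_num
      omega

private lemma homog_div {k : ℕ} (hk : 1 ≤ k) {p L q : MvPolynomial (Fin 2) ℝ}
    (hL : L.IsHomogeneous 1) (hq : q.IsHomogeneous k) (h : q = p * L) :
    (homogeneousComponent (k - 1) p) * L = q := by
  classical
  have hq' : homogeneousComponent k q = q := by
    rw [homogeneousComponent_of_mem ((mem_homogeneousSubmodule _ _).mpr hq), if_pos rfl]
  have hsum := p.sum_homogeneousComponent
  have key : q = ∑ j ∈ Finset.range (p.totalDegree + 1),
      if j = k - 1 then homogeneousComponent j p * L else 0 := by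
    calc q = homogeneousComponent k q := hq'.symm
    _ = homogeneousComponent k
        ((∑ j ∈ Finset.range (p.totalDegree + 1), homogeneousComponent j p) * L) := by
        rw [hsum, ← h]
    _ = ∑ j ∈ Finset.range (p.totalDegree + 1),
        homogeneousComponent k (homogeneousComponent j p * L) := by
        rw [Finset.sum_mul, map_sum]
    _ = ∑ j ∈ Finset.range (p.totalDegree + 1),
        if j = k - 1 then homogeneousComponent j p * L else 0 := by
        apply Finset.sum_congr rfl
        intro j _
        have hj : (homogeneousComponent j p * L).IsHomogeneous (j + 1) :=
          (homogeneousComponent_isHomogeneous j p).mul hL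
        rw [homogeneousComponent_of_mem ((mem_homogeneousSubmodule _ _).mpr hj)]
        by_cases h2 : j = k - 1
        · rw [if_pos (by omega), if_pos h2]
        · rw [if_neg (by omega), if_neg h2]
  rw [Finset.sum_ite_eq' _ (k - 1) (fun j => homogeneousComponent j p * L)] at key
  by_cases hmem : k - 1 ∈ Finset.range (p.totalDegree + 1)
  · rw [if_pos hmem] at key
    exact key.symm
  · rw [if_neg hmem] at key
    have : homogeneousComponent (k - 1) p = 0 := by
      apply homogeneousComponent_eq_zero
      simp only [Finset.mem_range] at hmem
      omega
    rw [this, key, zero_mul]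

private lemma primeX0 : Prime (MvPolynomial.X (0 : Fin 2) : MvPolynomial (Fin 2) ℝ) := by
  rw [← MulEquiv.prime_iff (MvPolynomial.finSuccEquiv ℝ 1).toRingEquiv.toMulEquiv]
  have : (MvPolynomial.finSuccEquiv ℝ 1).toRingEquiv.toMulEquiv (MvPolynomial.X 0)
      = Polynomial.X := MvPolynomial.finSuccEquiv_X_zero
  rw [this]
  exact Polynomial.prime_X

theorem stmt_15 (H : Matrix (Fin 2) (Fin 2) ℝ) (hH : H.PosDef)
    (k : ℕ) (hk : 1 ≤ k) (ν : ℝ) (U₁ U₂ : MvPolynomial (Fin 2) ℝ)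
    (hU₁ : U₁.IsHomogeneous k) (hU₂ : U₂.IsHomogeneous k)
    (heq : ∀ x : Fin 2 → ℝ,
      eval x U₁ * H.mulVec x 0 + eval x U₂ * H.mulVec x 1 +
        ν * ((1 / 2) * (x ⬝ᵥ H.mulVec x)) *
          (eval x (pderiv 0 U₁) + eval x (pderiv 1 U₂)) = 0) :
    ∃ σ : MvPolynomial (Fin 2) ℝ, σ.IsHomogeneous (k - 1) ∧
      ∀ x : Fin 2 → ℝ,
        eval x U₁ = -(ν / 2) * (eval x (pderiv 0 U₁) + eval x (pderiv 1 U₂)) * x 0 +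
            eval x σ * H.mulVec x 1 ∧
        eval x U₂ = -(ν / 2) * (eval x (pderiv 0 U₁) + eval x (pderiv 1 U₂)) * x 1 +
            eval x σ * (-(H.mulVec x 0)) := by
  classical
  obtain ⟨hsym, hpos⟩ := hH
  have hb : H 1 0 = H 0 1 := by
    conv_lhs => rw [← hsym]
    simp [Matrix.conjTranspose_apply]
  have hdet : 0 < H 0 0 * H 1 1 - H 0 1 * H 0 1 := by
    have := Matrix.PosDef.det_pos ⟨hsym, hpos⟩
    rwa [Matrix.det_fin_two, hb] at this
  set dd : ℝ := H 0 0 * H 1 1 - H 0 1 * H 0 1 with hdd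
  have hdne : dd ≠ 0 := ne_of_gt hdet
  have hc0 : 0 < H 1 1 := by
    have h1 := Matrix.PosDef.dotProduct_mulVec_pos ⟨hsym, hpos⟩ (x := fun i => if i = 1 then 1 else 0)
      (by intro h; have := congrFun h 1; simp at this)
    simpa [dotProduct, Matrix.mulVec, Fin.sum_univ_two] using h1
  -- polynomials
  set L₁ : MvPolynomial (Fin 2) ℝ := C (H 0 0) * X 0 + C (H 0 1) * X 1 with hL₁def
  set L₂ : MvPolynomial (Fin 2) ℝ := C (H 0 1) * X 0 + C (H 1 1) * X 1 with hL₂def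
  set D : MvPolynomial (Fin 2) ℝ := pderiv 0 U₁ + pderiv 1 U₂ with hDdef
  set V₁ : MvPolynomial (Fin 2) ℝ := U₁ + C (ν / 2) * D * X 0 with hV₁def
  set V₂ : MvPolynomial (Fin 2) ℝ := U₂ + C (ν / 2) * D * X 1 with hV₂def
  have hE : V₁ * L₁ + V₂ * L₂ = 0 := by
    apply MvPolynomial.funext
    intro x
    have h := heq x
    simp only [Matrix.mulVec, dotProduct, Fin.sum_univ_two, hb] at h
    simp only [hV₁def, hV₂def, hL₁def, hL₂def, hDdef, eval_add, eval_mul, eval_C, eval_X,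
      map_zero]
    linear_combination h
  -- change of variables
  set ψ : MvPolynomial (Fin 2) ℝ →ₐ[ℝ] MvPolynomial (Fin 2) ℝ :=
    aeval ![C (H 1 1 / dd) * X 0 + C (-(H 0 1) / dd) * X 1,
            C (-(H 0 1) / dd) * X 0 + C (H 0 0 / dd) * X 1] with hψdef
  set φ : MvPolynomial (Fin 2) ℝ →ₐ[ℝ] MvPolynomial (Fin 2) ℝ := aeval ![L₁, L₂] with hφdef
  have e1 : C (H 0 0) * C (H 1 1 / dd) + C (H 0 1) * C (-(H 0 1) / dd)
      = (1 : MvPolynomial (Fin 2) ℝ) := by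
    rw [← C_mul, ← C_mul, ← C_add, ← C_1]
    congr 1
    field_simp [hdd]
    ring
  have e2 : C (H 0 0) * C (-(H 0 1) / dd) + C (H 0 1) * C (H 0 0 / dd)
      = (0 : MvPolynomial (Fin 2) ℝ) := by
    rw [← C_mul, ← C_mul, ← C_add, ← C_0]
    congr 1
    field_simp
    ring
  have e3 : C (H 0 1) * C (H 1 1 / dd) + C (H 1 1) * C (-(H 0 1) / dd)
      = (0 : MvPolynomial (Fin 2) ℝ) := by
    rw [← C_mul, ← C_mul, ← C_add, ← C_0]
    congr 1
    field_simp
    ring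
  have e4 : C (H 0 1) * C (-(H 0 1) / dd) + C (H 1 1) * C (H 0 0 / dd)
      = (1 : MvPolynomial (Fin 2) ℝ) := by
    rw [← C_mul, ← C_mul, ← C_add, ← C_1]
    congr 1
    field_simp [hdd]
    ring
  have hψL₁ : ψ L₁ = X 0 := by
    simp only [hψdef, hL₁def, _root_.map_add, _root_.map_mul, aeval_X, aeval_C, algebraMap_eq,
      Matrix.cons_val_zero, Matrix.cons_val_one, Matrix.head_cons]
    linear_combination (X 0 : MvPolynomial (Fin 2) ℝ) * e1 + (X 1 : MvPolynomial (Fin 2) ℝ) * e2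
  have hψL₂ : ψ L₂ = X 1 := by
    simp only [hψdef, hL₂def, _root_.map_add, _root_.map_mul, aeval_X, aeval_C, algebraMap_eq,
      Matrix.cons_val_zero, Matrix.cons_val_one, Matrix.head_cons]
    linear_combination (X 0 : MvPolynomial (Fin 2) ℝ) * e3 + (X 1 : MvPolynomial (Fin 2) ℝ) * e4
  have hφψ : ∀ p : MvPolynomial (Fin 2) ℝ, φ (ψ p) = p := by
    have hcomp : φ.comp ψ = AlgHom.id ℝ (MvPolynomial (Fin 2) ℝ) := by
      apply MvPolynomial.algHom_ext
      intro i
      obtain rfl | rfl : i = 0 ∨ i = 1 := by fin_cases i <;> simp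
      · simp only [AlgHom.comp_apply, AlgHom.id_apply, hψdef, hφdef, _root_.map_add, _root_.map_mul,
          aeval_X, aeval_C, algebraMap_eq, Matrix.cons_val_zero, Matrix.cons_val_one,
          Matrix.head_cons, hL₁def, hL₂def]
        linear_combination (X 0 : MvPolynomial (Fin 2) ℝ) * e1
          + (X 1 : MvPolynomial (Fin 2) ℝ) * e3
      · simp only [AlgHom.comp_apply, AlgHom.id_apply, hψdef, hφdef, _root_.map_add, _root_.map_mul,
          aeval_X, aeval_C, algebraMap_eq, Matrix.cons_val_zero, Matrix.cons_val_one,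
          Matrix.head_cons, hL₁def, hL₂def]
        linear_combination (X 0 : MvPolynomial (Fin 2) ℝ) * e2
          + (X 1 : MvPolynomial (Fin 2) ℝ) * e4
    intro p
    exact AlgHom.congr_fun hcomp p
  have hEW : ψ V₁ * X 0 + ψ V₂ * X 1 = 0 := by
    have h := congrArg ψ hE
    rw [map_add, _root_.map_mul, _root_.map_mul, hψL₁, hψL₂, map_zero] at h
    exact h
  have hdvd : (X 0 : MvPolynomial (Fin 2) ℝ) ∣ ψ V₂ := by
    have h1 : (X 0 : MvPolynomial (Fin 2) ℝ) ∣ ψ V₂ * X 1 :=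
      ⟨-(ψ V₁), by linear_combination hEW⟩
    rcases primeX0.2.2 _ _ h1 with h | h
    · exact h
    · rw [MvPolynomial.X_dvd_X] at h
      exact absurd h (by decide)
  obtain ⟨τ, hτ⟩ := hdvd
  have hψV₁ : ψ V₁ = -(τ * X 1) := by
    have hz : (X 0 : MvPolynomial (Fin 2) ℝ) * (ψ V₁ + τ * X 1) = 0 := by
      linear_combination hEW - (X 1 : MvPolynomial (Fin 2) ℝ) * hτ
    rcases mul_eq_zero.mp hz with h | h
    · exact absurd h (MvPolynomial.X_ne_zero 0)
    · linear_combination h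
  set σ₀ : MvPolynomial (Fin 2) ℝ := -(φ τ) with hσ₀def
  have hV1 : V₁ = σ₀ * L₂ := by
    have h := congrArg φ hψV₁
    rw [hφψ V₁, map_neg, _root_.map_mul] at h
    have hx1 : φ (X 1) = L₂ := by simp [hφdef]
    rw [hx1] at h
    rw [h, hσ₀def]
    ring
  have hV2 : V₂ = -(σ₀ * L₁) := by
    have h := congrArg φ hτ
    rw [hφψ V₂, _root_.map_mul] at h
    have hx0 : φ (X 0) = L₁ := by simp [hφdef]
    rw [hx0] at h
    rw [h, hσ₀def]
    ring
  -- homogeneity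
  have hDk : D.IsHomogeneous (k - 1) := (pderiv_isHom hU₁ 0).add (pderiv_isHom hU₂ 1)
  have hV₁hom : V₁.IsHomogeneous k := by
    apply hU₁.add
    have : (C (ν / 2) * D * X 0 : MvPolynomial (Fin 2) ℝ).IsHomogeneous (0 + (k - 1) + 1) :=
      ((isHomogeneous_C _ _).mul hDk).mul (isHomogeneous_X _ _)
    have hkk : 0 + (k - 1) + 1 = k := by omega
    rwa [hkk] at this
  have hL₂hom : L₂.IsHomogeneous 1 := by
    have h1 : (C (H 0 1) * X 0 : MvPolynomial (Fin 2) ℝ).IsHomogeneous (0 + 1) :=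
      (isHomogeneous_C _ _).mul (isHomogeneous_X _ _)
    have h2 : (C (H 1 1) * X 1 : MvPolynomial (Fin 2) ℝ).IsHomogeneous (0 + 1) :=
      (isHomogeneous_C _ _).mul (isHomogeneous_X _ _)
    rw [Nat.zero_add] at h1 h2
    exact h1.add h2
  have key := homog_div hk hL₂hom hV₁hom hV1
  set σ : MvPolynomial (Fin 2) ℝ := homogeneousComponent (k - 1) σ₀ with hσdef
  have hL₂ne : L₂ ≠ 0 := by
    intro h
    have := congrArg (eval ![0, 1]) h
    simp [hL₂def] at this
    exact (ne_of_gt hc0) this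
  have hσσ₀ : σ₀ = σ := by
    apply mul_right_cancel₀ hL₂ne
    rw [key, ← hV1]
  refine ⟨σ, homogeneousComponent_isHomogeneous _ _, fun x => ?_⟩
  rw [← hσσ₀]
  have h1 := congrArg (eval x) hV1
  have h2 := congrArg (eval x) hV2
  simp only [hV₁def, hV₂def, hL₁def, hL₂def, hDdef, eval_add, eval_mul, eval_C, eval_X,
    eval_neg] at h1 h2
  constructor
  · simp only [Matrix.mulVec, dotProduct, Fin.sum_univ_two, hb]
    linear_combination h1
  · simp only [Matrix.mulVec, dotProduct, Fin.sum_univ_two, hb]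
    linear_combination h2
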